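/- arXiv:math/0412247 — 5 statements merged into one kernel-verified Lean document; each statement's English description precedes it below -/
import Mathlib

section
/- The positive polar cone of the solvency cone admits the explicit description K* = {ξ ∈ ℝ^{1+d_c} : ξ^i ≥ 0 for every i, and ξ^j ≤ ξ^i (1+λ^{ij}) for all i,j = 1,…,1+d_c}. -/
/-- The solvency cone `K` of Kabanov: portfolio holdings that can be made
nonnegative componentwise through nonnegative transfers `a` subject to
proportional transaction costs `lam`. -/
def solvencyCone (dc : ℕ) (lam : Fin (dc+1) → Fin (dc+1) → ℝ) : Set (Fin (dc+1) → ℝ) :=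
  {x | ∃ a : Fin (dc+1) → Fin (dc+1) → ℝ, (∀ i j, 0 ≤ a i j) ∧
    ∀ i, 0 ≤ x i + ∑ j, (a j i - (1 + lam i j) * a i j)}

/-- The positive polar cone `K*` of the solvency cone. -/
def polarCone (dc : ℕ) (lam : Fin (dc+1) → Fin (dc+1) → ℝ) : Set (Fin (dc+1) → ℝ) :=
  {ξ | ∀ x ∈ solvencyCone dc lam, 0 ≤ ∑ i, ξ i * x i}

/-- Explicit description of the positive polar of the solvency cone:
`K* = {ξ : ξ ≥ 0 componentwise and ξ^j ≤ ξ^i (1+λ^{ij}) for all i,j}`. -/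
theorem polarCone_eq_explicit (dc : ℕ) (hdc : 1 ≤ dc)
    (lam : Fin (dc+1) → Fin (dc+1) → ℝ) (hlam : ∀ i j, 0 ≤ lam i j) :
    polarCone dc lam =
      {ξ : Fin (dc+1) → ℝ | (∀ i, 0 ≤ ξ i) ∧ ∀ i j, ξ j ≤ ξ i * (1 + lam i j)} := by
  ext ξ
  constructor
  · intro hξ
    constructor
    · intro i
      have hx : (fun k => if k = i then (1:ℝ) else 0) ∈ solvencyCone dc lam := by
        refine ⟨0, fun _ _ => le_refl 0, fun k => ?_⟩
        simp only [Pi.zero_apply, mul_zero, sub_zero, Finset.sum_const_zero, add_zero]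
        split <;> norm_num
      have := hξ _ hx
      simpa [mul_ite] using this
    · intro i j
      set x : Fin (dc+1) → ℝ := fun k =>
        (1 + lam i j) * (if k = i then 1 else 0) - (if k = j then 1 else 0) with hxdef
      have hx : x ∈ solvencyCone dc lam := by
        refine ⟨fun p q => if p = i ∧ q = j then 1 else 0, ?_, fun k => ?_⟩
        · intro p q
          by_cases h : p = i ∧ q = j <;> simp [h]
        · show 0 ≤ x k + ∑ q, ((if q = i ∧ k = j then (1:ℝ) else 0)
              - (1 + lam k q) * (if k = i ∧ q = j then 1 else 0))
          have h1 : ∑ q, (if (q = i ∧ k = j) then (1:ℝ) else 0) = if k = j then 1 else 0 := by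
            by_cases hk : k = j <;> simp [hk, Finset.sum_ite_eq']
          have h2 : ∑ q, (1 + lam k q) * (if (k = i ∧ q = j) then (1:ℝ) else 0)
              = if k = i then (1 + lam i j) else 0 := by
            by_cases hk : k = i
            · subst hk
              simp [mul_ite, Finset.sum_ite_eq']
            · simp [hk]
          have hsum : ∑ q, ((if (q = i ∧ k = j) then (1:ℝ) else 0)
                - (1 + lam k q) * (if k = i ∧ q = j then 1 else 0))
              = (if k = j then 1 else 0) - (if k = i then (1 + lam i j) else 0) := by
            rw [Finset.sum_sub_distrib, h1, h2]
          have hxk : x k = (1 + lam i j) * (if k = i then 1 else 0)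
              - (if k = j then 1 else 0) := rfl
          rw [hxk, hsum]
          split_ifs <;> linarith [hlam i j]
      have h := hξ x hx
      have hterm : ∀ k, ξ k * x k = (1 + lam i j) * (if k = i then ξ i else 0)
          - (if k = j then ξ j else 0) := by
        intro k
        have hxk : x k = (1 + lam i j) * (if k = i then 1 else 0)
            - (if k = j then 1 else 0) := rfl
        rw [hxk]
        rcases eq_or_ne k i with hk | hk <;> rcases eq_or_ne k j with hk2 | hk2 <;>
          subst_vars <;> simp [*] <;> ring
      have hsum : ∑ k, ξ k * x k = (1 + lam i j) * ξ i - ξ j := by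
        rw [Finset.sum_congr rfl (fun k _ => hterm k), Finset.sum_sub_distrib,
          ← Finset.mul_sum, Finset.sum_ite_eq', Finset.sum_ite_eq']
        simp
      rw [hsum] at h
      linarith
  · rintro ⟨h1, h2⟩ x ⟨a, ha, hx⟩
    have swap : ∑ i, ∑ j, ξ i * a j i = ∑ i, ∑ j, ξ j * a i j := by
      rw [Finset.sum_comm]
    have expand1 : ∑ i, ξ i * (∑ j, ((1 + lam i j) * a i j - a j i))
        = (∑ i, ∑ j, ξ i * ((1 + lam i j) * a i j)) - ∑ i, ∑ j, ξ i * a j i := by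
      simp only [Finset.mul_sum, mul_sub, Finset.sum_sub_distrib]
    have expand2 : ∑ i, ∑ j, (ξ i * (1 + lam i j) - ξ j) * a i j
        = (∑ i, ∑ j, ξ i * ((1 + lam i j) * a i j)) - ∑ i, ∑ j, ξ j * a i j := by
      simp only [sub_mul, Finset.sum_sub_distrib]
      congr 1
      apply Finset.sum_congr rfl; intros i _
      apply Finset.sum_congr rfl; intros j _
      ring
    have key : 0 ≤ ∑ i, ξ i * (∑ j, ((1 + lam i j) * a i j - a j i)) := by
      rw [expand1, swap, ← expand2]
      apply Finset.sum_nonneg; intro i _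
      apply Finset.sum_nonneg; intro j _
      exact mul_nonneg (by have := h2 i j; linarith) (ha i j)
    calc (0:ℝ) ≤ ∑ i, ξ i * (∑ j, ((1 + lam i j) * a i j - a j i)) := key
      _ ≤ ∑ i, ξ i * x i := by
        apply Finset.sum_le_sum
        intro i _
        apply mul_le_mul_of_nonneg_left _ (h1 i)
        have hxi := hx i
        have hs : ∑ j, ((1 + lam i j) * a i j - a j i)
            = -∑ j, (a j i - (1 + lam i j) * a i j) := by
          rw [← Finset.sum_neg_distrib]
          apply Finset.sum_congr rfl; intros; ring
        rw [hs]; linarith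
end

section
/- There exists a constant δ > 0 such that for every ξ ∈ Λ and every index i = 1,…,1+d_c one has 0 < ξ^i and ξ^i + 1/ξ^i ≤ δ; that is, the components of elements of Λ are uniformly bounded away from 0 and from infinity. -/
/-- The section `Λ = {ξ ∈ K* : ξ^1 = 1}`. -/
def lambdaSection (dc : ℕ) (lam : Fin (dc+1) → Fin (dc+1) → ℝ) : Set (Fin (dc+1) → ℝ) :=
  {ξ ∈ polarCone dc lam | ξ 0 = 1}

lemma polarCone_nonneg {dc : ℕ} {lam : Fin (dc+1) → Fin (dc+1) → ℝ}
    {ξ : Fin (dc+1) → ℝ} (hξ : ξ ∈ polarCone dc lam) (i : Fin (dc+1)) :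
    0 ≤ ξ i := by
  have hx : (fun k => if k = i then (1:ℝ) else 0) ∈ solvencyCone dc lam := by
    refine ⟨0, fun _ _ => le_rfl, fun m => ?_⟩
    simp only [Pi.zero_apply, mul_zero, sub_zero, Finset.sum_const_zero, add_zero]
    split <;> norm_num
  have := hξ _ hx
  simpa [mul_ite] using this

lemma polarCone_transfer {dc : ℕ} {lam : Fin (dc+1) → Fin (dc+1) → ℝ}
    {ξ : Fin (dc+1) → ℝ} (hξ : ξ ∈ polarCone dc lam) {i j : Fin (dc+1)}
    (hij : i ≠ j) : ξ j ≤ (1 + lam i j) * ξ i := by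
  set x : Fin (dc+1) → ℝ :=
    fun k => (1 + lam i j) * (if k = i then 1 else 0) - (if k = j then 1 else 0) with hxdef
  set a : Fin (dc+1) → Fin (dc+1) → ℝ := fun k l => if k = i ∧ l = j then 1 else 0 with hadef
  have hx : x ∈ solvencyCone dc lam := by
    refine ⟨a, fun k l => ?_, fun m => ?_⟩
    · simp only [hadef]; split <;> norm_num
    · have h1 : ∑ l, a l m = if m = j then 1 else 0 := by
        simp only [hadef]
        by_cases hm : m = j <;> simp [hm]
      have h2 : ∑ l, (1 + lam m l) * a m l = if m = i then 1 + lam i j else 0 := by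
        simp only [hadef]
        by_cases hm : m = i
        · subst hm; simp [mul_ite]
        · simp [hm]
      rw [Finset.sum_sub_distrib, h1, h2, hxdef]
      by_cases hmi : m = i
      · subst hmi
        simp only [if_pos rfl, if_neg hij]
        ring_nf
        simp [le_refl]
        linarith
      · by_cases hmj : m = j <;> simp [hmi, hmj] <;> linarith
  have := hξ _ hx
  have hsum : ∑ k, ξ k * x k = (1 + lam i j) * ξ i - ξ j := by
    simp only [hxdef, mul_sub, mul_ite, mul_one, mul_zero, Finset.sum_sub_distrib]
    rw [Finset.sum_ite_eq' Finset.univ i (fun k => ξ k * (1 + lam i j)),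
        Finset.sum_ite_eq' Finset.univ j ξ]
    simp [mul_comm]
  rw [hsum] at this
  linarith

/-- Under `(Hλ)`, the components of elements of `Λ` are uniformly bounded away
from `0` and `∞`: there is `δ > 0` with `0 < ξ^i` and `ξ^i + 1/ξ^i ≤ δ`
for every `ξ ∈ Λ` and every `i`. -/
theorem lambdaSection_uniform_bounds (dc : ℕ) (hdc : 1 ≤ dc)
    (lam : Fin (dc+1) → Fin (dc+1) → ℝ) (hlam : ∀ i j, 0 ≤ lam i j)
    (hHlam : ∀ i j, i ≠ j → 0 < lam i j + lam j i) :
    ∃ δ : ℝ, 0 < δ ∧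
      ∀ ξ ∈ lambdaSection dc lam, ∀ i, 0 < ξ i ∧ ξ i + 1 / ξ i ≤ δ := by
  set S : ℝ := ∑ k, ∑ l, lam k l with hS
  have hS0 : 0 ≤ S := Finset.sum_nonneg fun k _ => Finset.sum_nonneg fun l _ => hlam k l
  have hle : ∀ k l, lam k l ≤ S := by
    intro k l
    calc lam k l ≤ ∑ l', lam k l' :=
          Finset.single_le_sum (fun l' _ => hlam k l') (Finset.mem_univ l)
      _ ≤ S := Finset.single_le_sum (fun k' _ => Finset.sum_nonneg fun l' _ => hlam k' l')
          (Finset.mem_univ k)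
  refine ⟨2 + 2 * S, by linarith, ?_⟩
  rintro ξ ⟨hpol, h0⟩ i
  by_cases hi : i = 0
  · subst hi
    rw [h0]; norm_num; linarith
  · have hub : ξ i ≤ 1 + lam 0 i := by
      have := polarCone_transfer hpol (Ne.symm hi)
      rw [h0, mul_one] at this; exact this
    have hlb : 1 ≤ (1 + lam i 0) * ξ i := by
      have := polarCone_transfer hpol hi
      rwa [h0] at this
    have hpos : 0 < ξ i := by
      rcases lt_or_eq_of_le (polarCone_nonneg hpol i) with h | h
      · exact h
      · exfalso; rw [← h] at hlb; simp at hlb; linarith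
    have hinv : 1 / ξ i ≤ 1 + lam i 0 := by
      rw [div_le_iff₀ hpos]; linarith
    have h1 := hle 0 i
    have h2 := hle i 0
    exact ⟨hpos, by linarith⟩
end

section
/- There exist an integer n ≥ 1 and vectors e₁,…,e_n ∈ (0,∞)^{1+d_c} such that K* = {Σ_{i=1}^n α^i e_i : α ∈ ℝ₊^n}, and such that for every α ∈ ℝ₊^n, Σ_{i=1}^n α^i e_i = 0 implies α = 0. -/
/-- Constraint index type. -/
abbrev cIdx (dc : ℕ) := Fin (dc+1) ⊕ (Fin (dc+1) × Fin (dc+1))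

/-- The linear functionals cutting out the polar cone. -/
noncomputable def cFun (dc : ℕ) (lam : Fin (dc+1) → Fin (dc+1) → ℝ) :
    cIdx dc → ((Fin (dc+1) → ℝ) →ₗ[ℝ] ℝ)
  | .inl i => LinearMap.proj i
  | .inr (i,j) => (1 + lam i j) • LinearMap.proj i - LinearMap.proj j

lemma cFun_inl (dc : ℕ) (lam : Fin (dc+1) → Fin (dc+1) → ℝ) (i : Fin (dc+1))
    (ξ : Fin (dc+1) → ℝ) : cFun dc lam (.inl i) ξ = ξ i := rfl

lemma cFun_inr (dc : ℕ) (lam : Fin (dc+1) → Fin (dc+1) → ℝ) (i j : Fin (dc+1))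
    (ξ : Fin (dc+1) → ℝ) : cFun dc lam (.inr (i,j)) ξ = (1 + lam i j) * ξ i - ξ j := rfl

/-- The polar cone described by finitely many linear inequalities. -/
def Pset (dc : ℕ) (lam : Fin (dc+1) → Fin (dc+1) → ℝ) : Set (Fin (dc+1) → ℝ) :=
  {ξ | ∀ c, 0 ≤ cFun dc lam c ξ}

lemma polarCone_eq_Pset (dc : ℕ) (lam : Fin (dc+1) → Fin (dc+1) → ℝ)
    (hlam : ∀ i j, 0 ≤ lam i j) : polarCone dc lam = Pset dc lam := by
  apply Set.Subset.antisymm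
  · intro ξ hξ c
    match c with
    | .inl i =>
      rw [cFun_inl]
      have hx : (fun k => if k = i then (1:ℝ) else 0) ∈ solvencyCone dc lam := by
        refine ⟨0, fun _ _ => le_rfl, fun k => ?_⟩
        simp only [Pi.zero_apply, mul_zero, sub_zero, Finset.sum_const_zero, add_zero]
        split <;> norm_num
      have := hξ _ hx
      simpa [mul_ite, Finset.sum_ite_eq'] using this
    | .inr (i,j) =>
      rw [cFun_inr]
      set x : Fin (dc+1) → ℝ :=
        fun k => (if k = i then (1 + lam i j) else 0) - (if k = j then 1 else 0) with hxdef
      have hx : x ∈ solvencyCone dc lam := by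
        refine ⟨fun p q => (if p = i then (1:ℝ) else 0) * (if q = j then 1 else 0),
          fun p q => by positivity, fun k => ?_⟩
        have h1 : (∑ m, (if m = i then (1:ℝ) else 0) * (if k = j then 1 else 0))
            = (if k = j then 1 else 0) := by
          rw [Finset.sum_congr rfl (fun m _ => rfl), ← Finset.sum_mul]
          simp [Finset.sum_ite_eq']
        have h2 : (∑ m, (1 + lam k m) * ((if k = i then (1:ℝ) else 0) * (if m = j then 1 else 0)))
            = (if k = i then (1 + lam i j) else 0) := by
          by_cases hk : k = i <;> simp [hk, mul_ite, Finset.sum_ite_eq']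
        rw [Finset.sum_sub_distrib, h1, h2, hxdef]
        by_cases hk1 : k = i <;> by_cases hk2 : k = j <;> simp [hk1, hk2]
      have := hξ _ hx
      have hsum : ∑ k, ξ k * x k = (1 + lam i j) * ξ i - ξ j := by
        simp only [hxdef, mul_sub, mul_ite, mul_zero, mul_one, Finset.sum_sub_distrib,
          Finset.sum_ite_eq', Finset.mem_univ, if_true]
        ring
      linarith [this, hsum.symm ▸ this]
  · rintro ξ hξ x ⟨a, ha0, hax⟩
    have hξ0 : ∀ i, 0 ≤ ξ i := fun i => hξ (.inl i)
    have key : ∀ i, ξ i * (∑ j, ((1 + lam i j) * a i j - a j i)) ≤ ξ i * x i := by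
      intro i
      apply mul_le_mul_of_nonneg_left _ (hξ0 i)
      have := hax i
      have : ∑ j, ((1 + lam i j) * a i j - a j i) = -(∑ j, (a j i - (1 + lam i j) * a i j)) := by
        rw [← Finset.sum_neg_distrib]
        exact Finset.sum_congr rfl fun j _ => by ring
      linarith [hax i, this]
    have lhs_nonneg : 0 ≤ ∑ i, ξ i * (∑ j, ((1 + lam i j) * a i j - a j i)) := by
      have expand : ∑ i, ξ i * (∑ j, ((1 + lam i j) * a i j - a j i))
          = (∑ i, ∑ j, a i j * ((1 + lam i j) * ξ i)) - ∑ i, ∑ j, ξ i * a j i := by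
        rw [← Finset.sum_sub_distrib]
        refine Finset.sum_congr rfl fun i _ => ?_
        rw [Finset.mul_sum, ← Finset.sum_sub_distrib]
        exact Finset.sum_congr rfl fun j _ => by ring
      have swap : (∑ i, ∑ j, ξ i * a j i) = ∑ i, ∑ j, a i j * ξ j := by
        rw [Finset.sum_comm]
        exact Finset.sum_congr rfl fun i _ => Finset.sum_congr rfl fun j _ => by ring
      have : ∑ i, ξ i * (∑ j, ((1 + lam i j) * a i j - a j i))
          = ∑ i, ∑ j, a i j * ((1 + lam i j) * ξ i - ξ j) := by
        rw [expand, swap, ← Finset.sum_sub_distrib]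
        refine Finset.sum_congr rfl fun i _ => ?_
        rw [← Finset.sum_sub_distrib]
        exact Finset.sum_congr rfl fun j _ => by ring
      rw [this]
      apply Finset.sum_nonneg; intro i _
      apply Finset.sum_nonneg; intro j _
      have := hξ (.inr (i,j))
      rw [cFun_inr] at this
      exact mul_nonneg (ha0 i j) this
    calc (0:ℝ) ≤ ∑ i, ξ i * (∑ j, ((1 + lam i j) * a i j - a j i)) := lhs_nonneg
    _ ≤ ∑ i, ξ i * x i := Finset.sum_le_sum fun i _ => key i

/-- The compact convex base of the polar cone. -/
def Bset (dc : ℕ) (lam : Fin (dc+1) → Fin (dc+1) → ℝ) : Set (Fin (dc+1) → ℝ) :=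
  {ξ | ξ ∈ Pset dc lam ∧ ∑ i, ξ i = 1}

lemma Bset_convex (dc : ℕ) (lam : Fin (dc+1) → Fin (dc+1) → ℝ) :
    Convex ℝ (Bset dc lam) := by
  intro x hx y hy a b ha hb hab
  refine ⟨fun c => ?_, ?_⟩
  · have : cFun dc lam c (a • x + b • y) = a * cFun dc lam c x + b * cFun dc lam c y := by
      simp [map_add, map_smul, smul_eq_mul]
    rw [this]
    exact add_nonneg (mul_nonneg ha (hx.1 c)) (mul_nonneg hb (hy.1 c))
  · have : ∑ i, (a • x + b • y) i = a * (∑ i, x i) + b * (∑ i, y i) := by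
      simp [Finset.sum_add_distrib, Finset.mul_sum]
    rw [this, hx.2, hy.2]
    linarith

lemma Bset_isCompact (dc : ℕ) (lam : Fin (dc+1) → Fin (dc+1) → ℝ) :
    IsCompact (Bset dc lam) := by
  have hcl : IsClosed (Bset dc lam) := by
    have : Bset dc lam
        = (⋂ c, {ξ : Fin (dc+1) → ℝ | 0 ≤ cFun dc lam c ξ})
          ∩ {ξ : Fin (dc+1) → ℝ | ∑ i, ξ i = 1} := by
      ext ξ; simp [Bset, Pset, Set.mem_iInter]
    rw [this]
    exact (isClosed_iInter fun c => isClosed_le continuous_const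
        (cFun dc lam c).continuous_of_finiteDimensional).inter
      (isClosed_eq (continuous_finset_sum _ fun i _ => continuous_apply i) continuous_const)
  have hsub : Bset dc lam ⊆ Set.Icc 0 1 := by
    intro ξ hξ
    constructor
    · intro i; exact hξ.1 (.inl i)
    · intro i
      have : ξ i ≤ ∑ k, ξ k :=
        Finset.single_le_sum (fun k _ => hξ.1 (.inl k)) (Finset.mem_univ i)
      rw [hξ.2] at this
      simpa using this
  exact isCompact_Icc.of_isClosed_subset hcl hsub

lemma Bset_mem_unif (dc : ℕ) (lam : Fin (dc+1) → Fin (dc+1) → ℝ)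
    (hlam : ∀ i j, 0 ≤ lam i j) :
    (fun _ => ((dc:ℝ)+1)⁻¹) ∈ Bset dc lam := by
  have hpos : (0:ℝ) < (dc:ℝ) + 1 := by positivity
  refine ⟨fun c => ?_, ?_⟩
  · match c with
    | .inl i => rw [cFun_inl]; positivity
    | .inr (i,j) =>
      rw [cFun_inr]
      have := hlam i j
      have h2 : (0:ℝ) ≤ ((dc:ℝ)+1)⁻¹ := by positivity
      nlinarith
  · have h : ∑ _i : Fin (dc+1), ((dc:ℝ)+1)⁻¹ = ((dc:ℝ)+1) * ((dc:ℝ)+1)⁻¹ := by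
      rw [Finset.sum_const, Finset.card_univ, Fintype.card_fin, nsmul_eq_mul]
      push_cast; ring
    rw [h, mul_inv_cancel₀ (ne_of_gt hpos)]

instance (dc : ℕ) : Nonempty (cIdx dc) := ⟨.inl 0⟩

lemma extremePoints_finite (dc : ℕ) (lam : Fin (dc+1) → Fin (dc+1) → ℝ) :
    (Set.extremePoints ℝ (Bset dc lam)).Finite := by
  set E := Set.extremePoints ℝ (Bset dc lam) with hE
  have hact : ∀ x ∈ E, ∀ y ∈ E,
      ({c | cFun dc lam c x = 0} : Set (cIdx dc)) = {c | cFun dc lam c y = 0} → x = y := by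
    intro x hx y hy hxy
    by_contra hne
    set v := y - x with hv
    have hvne : v ≠ 0 := sub_ne_zero.mpr (Ne.symm hne)
    rw [mem_extremePoints] at hx hy
    have hxB := hx.1
    have hyB := hy.1
    -- choose ε
    set g : cIdx dc → ℝ := fun c =>
      if cFun dc lam c x = 0 then 1 else cFun dc lam c x / (|cFun dc lam c v| + 1) with hg
    set ε : ℝ := Finset.univ.inf' Finset.univ_nonempty g with hεdef
    have hεg : ∀ c, ε ≤ g c := fun c => Finset.inf'_le g (Finset.mem_univ c)
    have hε : 0 < ε := by
      rw [hεdef, Finset.lt_inf'_iff]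
      intro c _
      show 0 < g c
      rw [hg]
      by_cases h0 : cFun dc lam c x = 0
      · simp [h0]
      · have h1 : 0 < cFun dc lam c x := lt_of_le_of_ne (hxB.1 c) (Ne.symm h0)
        simp only [h0, if_false]
        positivity
    have claim : ∀ t : ℝ, |t| ≤ ε → x + t • v ∈ Bset dc lam := by
      intro t ht
      refine ⟨fun c => ?_, ?_⟩
      · by_cases h0 : cFun dc lam c x = 0
        · have hcy : cFun dc lam c y = 0 := by
            have : c ∈ ({c | cFun dc lam c y = 0} : Set (cIdx dc)) := hxy ▸ h0
            exact this
          have hv0 : cFun dc lam c v = 0 := by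
            rw [hv, map_sub, hcy, h0, sub_zero]
          rw [map_add, map_smul, smul_eq_mul, h0, hv0, mul_zero, add_zero]
        · have hthis : ε ≤ cFun dc lam c x / (|cFun dc lam c v| + 1) := by
            have := hεg c; rw [hg] at this; simpa [h0] using this
          have hd : ε * (|cFun dc lam c v| + 1) ≤ cFun dc lam c x :=
            (le_div_iff₀ (by positivity)).mp hthis
          rw [map_add, map_smul, smul_eq_mul]
          have e1 : |t * cFun dc lam c v| = |t| * |cFun dc lam c v| := abs_mul _ _
          have e2 : |t| * |cFun dc lam c v| ≤ ε * |cFun dc lam c v| :=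
            mul_le_mul_of_nonneg_right ht (abs_nonneg _)
          linarith [neg_abs_le (t * cFun dc lam c v)]
      · have hsv : ∑ i, v i = 0 := by
          simp only [hv, Pi.sub_apply, Finset.sum_sub_distrib, hxB.2, hyB.2, sub_self]
        have : ∑ i, (x + t • v) i = (∑ i, x i) + t * ∑ i, v i := by
          simp [Finset.sum_add_distrib, Finset.mul_sum]
        rw [this, hsv, mul_zero, add_zero, hxB.2]
    have hz1 : x + ε • v ∈ Bset dc lam := claim ε (by rw [abs_of_pos hε])
    have hz2 : x + (-ε) • v ∈ Bset dc lam := claim (-ε) (by rw [abs_neg, abs_of_pos hε])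
    have hseg : x ∈ openSegment ℝ (x + ε • v) (x + (-ε) • v) := by
      refine ⟨1/2, 1/2, by norm_num, by norm_num, by norm_num, ?_⟩
      module
    have h := (hx.2 _ hz1 _ hz2 hseg).1
    have hev : ε • v = 0 := by
      have := congrArg (fun w => w - x) h
      simpa using this
    exact hvne (by simpa [smul_eq_zero, ne_of_gt hε] using hev)
  have : Set.InjOn (fun x => ({c | cFun dc lam c x = 0} : Set (cIdx dc))) E :=
    fun x hx y hy h => hact x hx y hy h
  exact Set.Finite.of_finite_image (Set.toFinite _) this

/-- `K*` is a polyhedral cone generated by finitely many vectors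
`e₁, …, eₙ ∈ (0,∞)^{1+d_c}` which moreover are positively independent:
a nonnegative combination of them vanishes only if all coefficients vanish. -/
theorem polarCone_polyhedral_generators (dc : ℕ) (hdc : 1 ≤ dc)
    (lam : Fin (dc+1) → Fin (dc+1) → ℝ) (hlam : ∀ i j, 0 ≤ lam i j) :
    ∃ n : ℕ, 1 ≤ n ∧ ∃ e : Fin n → Fin (dc+1) → ℝ,
      (∀ i k, 0 < e i k) ∧
      (polarCone dc lam =
        {x : Fin (dc+1) → ℝ | ∃ α : Fin n → ℝ, (∀ i, 0 ≤ α i) ∧ x = ∑ i, α i • e i}) ∧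
      (∀ α : Fin n → ℝ, (∀ i, 0 ≤ α i) → ∑ i, α i • e i = 0 → α = 0) := by
  classical
  set E := Set.extremePoints ℝ (Bset dc lam) with hEdef
  have hKM : closure (convexHull ℝ E) = Bset dc lam :=
    closure_convexHull_extremePoints (Bset_isCompact dc lam) (Bset_convex dc lam)
  have hEfin : E.Finite := extremePoints_finite dc lam
  have hBhull : Bset dc lam = convexHull ℝ E := by
    rw [← hKM, ((hEfin.isCompact_convexHull ℝ).isClosed).closure_eq]
  obtain ⟨n, f, hf⟩ := hEfin.fin_embedding
  have hEB : E ⊆ Bset dc lam := extremePoints_subset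
  have huB := Bset_mem_unif dc lam hlam
  have hn : 1 ≤ n := by
    by_contra hn
    interval_cases n
    have : E = ∅ := by rw [← hf]; exact Set.range_eq_empty f
    rw [this, convexHull_empty] at hBhull
    exact absurd (hBhull ▸ huB) (Set.notMem_empty _)
  refine ⟨n, hn, fun i => f i, ?_, ?_, ?_⟩
  -- positivity of generators
  · intro i k
    have hiB : (f i : Fin (dc+1) → ℝ) ∈ Bset dc lam := hEB (hf ▸ Set.mem_range_self i)
    by_contra hk
    push_neg at hk
    have hk0 : f i k = 0 := le_antisymm hk (hiB.1 (.inl k))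
    have hall : ∀ m, f i m = 0 := by
      intro m
      have h1 := hiB.1 (.inr (k, m))
      rw [cFun_inr] at h1
      have h2 := hiB.1 (.inl m)
      rw [cFun_inl] at h2
      rw [hk0] at h1
      nlinarith
    have : ∑ m, f i m = 0 := Finset.sum_eq_zero fun m _ => hall m
    rw [hiB.2] at this
    norm_num at this
  -- generation
  · rw [polarCone_eq_Pset dc lam hlam]
    ext x
    constructor
    · intro hx
      by_cases hx0 : x = 0
      · exact ⟨0, fun i => le_rfl, by simp [hx0]⟩
      · set s := ∑ i, x i with hs
        have hxnn : ∀ i, 0 ≤ x i := fun i => hx (.inl i)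
        have hs0 : 0 < s := by
          rcases (Finset.sum_nonneg fun i _ => hxnn i).lt_or_eq with h | h
          · exact h
          · exfalso
            apply hx0
            funext i
            exact (Finset.sum_eq_zero_iff_of_nonneg fun i _ => hxnn i).mp h.symm i
              (Finset.mem_univ i)
        have hyB : s⁻¹ • x ∈ Bset dc lam := by
          refine ⟨fun c => ?_, ?_⟩
          · rw [map_smul, smul_eq_mul]
            exact mul_nonneg (by positivity) (hx c)
          · simp only [Pi.smul_apply, smul_eq_mul, ← Finset.mul_sum, ← hs]
            exact inv_mul_cancel₀ (ne_of_gt hs0)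
        rw [hBhull, ← hf] at hyB
        have hrange : (Set.range f : Set (Fin (dc+1) → ℝ))
            = ((Finset.univ.image f : Finset (Fin (dc+1) → ℝ)) : Set (Fin (dc+1) → ℝ)) := by
          simp [Finset.coe_image]
        rw [hrange] at hyB
        obtain ⟨w, hw0, hw1, hwsum⟩ := Finset.mem_convexHull'.mp hyB
        refine ⟨fun i => s * w (f i), fun i => mul_nonneg hs0.le
          (hw0 _ (Finset.mem_image_of_mem f (Finset.mem_univ i))), ?_⟩
        have himg : ∑ b ∈ Finset.univ.image f, w b • b = ∑ i : Fin n, w (f i) • (f i : Fin (dc+1) → ℝ) :=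
          Finset.sum_image (fun p _ q _ h => f.injective h)
        have hx_eq : x = s • (s⁻¹ • x) := by
          rw [smul_smul, mul_inv_cancel₀ (ne_of_gt hs0), one_smul]
        rw [hx_eq, ← hwsum, himg, Finset.smul_sum]
        exact Finset.sum_congr rfl fun i _ => by rw [smul_smul]
    · rintro ⟨α, hα, rfl⟩
      intro c
      have : cFun dc lam c (∑ i, α i • (f i : Fin (dc+1) → ℝ))
          = ∑ i, α i * cFun dc lam c (f i) := by
        rw [map_sum]
        exact Finset.sum_congr rfl fun i _ => by rw [map_smul, smul_eq_mul]
      rw [this]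
      refine Finset.sum_nonneg fun i _ => mul_nonneg (hα i) ?_
      exact (hEB (hf ▸ Set.mem_range_self i)).1 c
  -- positive independence
  · intro α hα hsum
    funext i
    have hcoord : ∑ k, α k * (f k : Fin (dc+1) → ℝ) 0 = 0 := by
      have := congrFun hsum 0
      simpa [Finset.sum_apply] using this
    have hterm : ∀ k ∈ Finset.univ, 0 ≤ α k * (f k : Fin (dc+1) → ℝ) 0 := by
      intro k _
      exact mul_nonneg (hα k) ((hEB (hf ▸ Set.mem_range_self k)).1 (.inl 0))
    have := (Finset.sum_eq_zero_iff_of_nonneg hterm).mp hcoord i (Finset.mem_univ i)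
    have hpos : 0 < (f i : Fin (dc+1) → ℝ) 0 := by
      -- same positivity argument, reprove quickly
      have hiB : (f i : Fin (dc+1) → ℝ) ∈ Bset dc lam := hEB (hf ▸ Set.mem_range_self i)
      by_contra hk
      push_neg at hk
      have hk0 : f i 0 = 0 := le_antisymm hk (hiB.1 (.inl 0))
      have hall : ∀ m, f i m = 0 := by
        intro m
        have h1 := hiB.1 (.inr (0, m))
        rw [cFun_inr] at h1
        have h2 := hiB.1 (.inl m)
        rw [cFun_inl] at h2
        rw [hk0] at h1
        nlinarith
      have h0 : ∑ m, f i m = 0 := Finset.sum_eq_zero fun m _ => hall m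
      rw [hiB.2] at h0
      norm_num at h0
    have := mul_eq_zero.mp this
    rcases this with h | h
    · simpa using h
    · exact absurd h (ne_of_gt hpos)
end

section
/- Fix z^f > 0 and let a := [z^f − K¹]⁺. The function Ĝ : (0,∞) → ℝ given by Ĝ(z^c) = a · min(z^c/K̃², 1) is the least concave majorant on (0,∞) of G(z^c) = a · 1_{z^c > K̃²}; that is: Ĝ is concave on (0,∞), Ĝ(z^c) ≥ G(z^c) for all z^c > 0, and any concave function h : (0,∞) → ℝ with h ≥ G pointwise satisfies h ≥ Ĝ pointwise. -/
/-- With `a = [z^f − K¹]⁺` and `K̃² = K²/(1+λ^{21})`, the function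
`Ĝ(z^c) = a · min(z^c/K̃², 1)` is the least concave majorant on `(0,∞)` of
`G(z^c) = a · 1_{z^c > K̃²}`: it is concave, dominates `G`, and is dominated by
every concave majorant of `G`. -/
theorem least_concave_majorant_digital (K1 K2 l21 : ℝ)
    (hK1 : 0 < K1) (hK2 : 0 < K2) (h21 : 0 ≤ l21)
    (zf : ℝ) (hzf : 0 < zf) :
    ConcaveOn ℝ (Set.Ioi (0:ℝ))
      (fun zc : ℝ => max (zf - K1) 0 * min (zc / (K2 / (1 + l21))) 1) ∧
    (∀ zc : ℝ, 0 < zc →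
      max (zf - K1) 0 * (if K2 / (1 + l21) < zc then (1:ℝ) else 0) ≤
        max (zf - K1) 0 * min (zc / (K2 / (1 + l21))) 1) ∧
    (∀ h : ℝ → ℝ, ConcaveOn ℝ (Set.Ioi (0:ℝ)) h →
      (∀ zc : ℝ, 0 < zc →
        max (zf - K1) 0 * (if K2 / (1 + l21) < zc then (1:ℝ) else 0) ≤ h zc) →
      ∀ zc : ℝ, 0 < zc →
        max (zf - K1) 0 * min (zc / (K2 / (1 + l21))) 1 ≤ h zc) := by
  set k : ℝ := K2 / (1 + l21) with hkdef
  have hk : 0 < k := div_pos hK2 (by linarith)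
  set a : ℝ := max (zf - K1) 0 with hadef
  have ha : 0 ≤ a := le_max_right _ _
  refine ⟨?_, ?_, ?_⟩
  · -- concavity
    have h1 : ConcaveOn ℝ (Set.Ioi (0:ℝ)) (fun zc : ℝ => zc / k) := by
      have := (concaveOn_id (convex_Ioi (0:ℝ))).smul (c := (1/k)) (by positivity)
      simpa [smul_eq_mul, div_eq_inv_mul] using this
    have h2 : ConcaveOn ℝ (Set.Ioi (0:ℝ)) (fun _ : ℝ => (1:ℝ)) :=
      concaveOn_const _ (convex_Ioi 0)
    have hmin := h1.inf h2
    have := hmin.smul (c := a) ha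
    simpa [Pi.inf_def, smul_eq_mul] using this
  · -- majorant
    intro zc hzc
    by_cases hc : k < zc
    · rw [if_pos hc, min_eq_right (by rw [le_div_iff₀ hk]; linarith)]
    · rw [if_neg hc]
      have : 0 ≤ min (zc / k) 1 := le_min (by positivity) one_pos.le
      nlinarith
  · -- least
    intro h hconc hmaj zc hzc
    by_cases hc : k < zc
    · rw [min_eq_right (by rw [le_div_iff₀ hk]; linarith), mul_one]
      simpa [hc] using hmaj zc hzc
    · push_neg at hc
      rw [min_eq_left (by rw [div_le_one hk]; exact hc)]
      apply le_of_forall_pos_le_add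
      intro δ hδ
      set ε : ℝ := min zc (k * δ / (a + 1)) with hεdef
      have hε : 0 < ε := lt_min hzc (by positivity)
      have hεzc : ε ≤ zc := min_le_left _ _
      have hεk : ε ≤ k := hεzc.trans hc
      set t : ℝ := (zc - ε) / k with htdef
      have ht0 : 0 ≤ t := div_nonneg (by linarith) hk.le
      have ht1 : t ≤ 1 := by rw [div_le_one hk]; linarith
      have hmemε : ε ∈ Set.Ioi (0:ℝ) := hε
      have hmemy : k + ε ∈ Set.Ioi (0:ℝ) := by simp; linarith
      have hcomb := hconc.2 hmemε hmemy (by linarith : (0:ℝ) ≤ 1 - t) ht0 (by ring)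
      have hpt : (1 - t) • ε + t • (k + ε) = zc := by
        simp only [smul_eq_mul]
        field_simp [htdef]
        rw [htdef]; linear_combination div_mul_cancel₀ (zc - ε) hk.ne'
      rw [hpt] at hcomb
      have hhε : 0 ≤ h ε := by
        have := hmaj ε hε
        rw [if_neg (not_lt.2 hεk)] at this
        simpa using this
      have hhy : a ≤ h (k + ε) := by
        have := hmaj (k + ε) (by linarith)
        rw [if_pos (by linarith)] at this
        simpa using this
      have key : t * a ≤ h zc := by
        have h1 : t * a ≤ (1 - t) * h ε + t * h (k + ε) := by nlinarith
        simpa [smul_eq_mul] using h1.trans hcomb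
      have hεδ : a * ε / k ≤ δ := by
        have hεle : ε ≤ k * δ / (a + 1) := min_le_right _ _
        rw [div_le_iff₀ hk]
        have : a * ε ≤ a * (k * δ / (a + 1)) := by nlinarith
        calc a * ε ≤ a * (k * δ / (a + 1)) := this
          _ ≤ δ * k := by rw [mul_div_assoc']; rw [div_le_iff₀ (by linarith)]; nlinarith
      have : a * (zc / k) = t * a + a * ε / k := by
        field_simp [htdef]; rw [htdef]; linear_combination (-a) * div_mul_cancel₀ (zc - ε) hk.ne'
      linarith
end

section
/- Let X be an integrable real random variable on a probability space, and let K̃ > 0 and c > 0. Define φ(Δ) := E[(X − Δ·K̃)⁺] + c·Δ for Δ ≥ 0. Then (i) φ is convex on [0,∞); and (ii) if K̃ · P(X ≥ 0) ≤ c, then φ(Δ) ≥ φ(0) for every Δ ≥ 0, i.e. the minimum of φ over [0,∞) is attained at Δ = 0. -/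
open MeasureTheory

/-- The buy-and-hold cost functional `φ(Δ) = E[(X − ΔK̃)⁺] + cΔ` is convex on
`[0,∞)`, and if `K̃·P(X ≥ 0) ≤ c` then `φ` attains its minimum over `[0,∞)`
at `Δ = 0`. -/
theorem buy_and_hold_cost_convex_min_at_zero
    {Ω : Type*} [MeasurableSpace Ω] (μ : Measure Ω) [IsProbabilityMeasure μ]
    (X : Ω → ℝ) (hX : Integrable X μ) (Kt c : ℝ) (hK : 0 < Kt) (hc : 0 < c) :
    ConvexOn ℝ (Set.Ici (0:ℝ))
      (fun Δ : ℝ => (∫ ω, max (X ω - Δ * Kt) 0 ∂μ) + c * Δ) ∧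
    (Kt * (μ {ω | 0 ≤ X ω}).toReal ≤ c →
      ∀ Δ : ℝ, 0 ≤ Δ →
        (∫ ω, max (X ω - 0 * Kt) 0 ∂μ) + c * 0 ≤
          (∫ ω, max (X ω - Δ * Kt) 0 ∂μ) + c * Δ) := by
  have hint : ∀ Δ : ℝ, Integrable (fun ω => max (X ω - Δ * Kt) 0) μ := fun Δ =>
    (hX.sub (integrable_const (Δ * Kt))).pos_part
  constructor
  · refine ⟨convex_Ici 0, ?_⟩
    intro a _ b _ p q hp hq hpq
    simp only [smul_eq_mul]
    have key : ∀ ω, max (X ω - (p * a + q * b) * Kt) 0 ≤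
        p * max (X ω - a * Kt) 0 + q * max (X ω - b * Kt) 0 := by
      intro ω
      have h1 : X ω - a * Kt ≤ max (X ω - a * Kt) 0 := le_max_left _ _
      have h2 : X ω - b * Kt ≤ max (X ω - b * Kt) 0 := le_max_left _ _
      have h3 : (0:ℝ) ≤ max (X ω - a * Kt) 0 := le_max_right _ _
      have h4 : (0:ℝ) ≤ max (X ω - b * Kt) 0 := le_max_right _ _
      apply max_le _ (by positivity)
      have heq : X ω - (p * a + q * b) * Kt
          = p * (X ω - a * Kt) + q * (X ω - b * Kt) := by
        linear_combination (-(X ω)) * hpq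
      rw [heq]
      exact add_le_add (mul_le_mul_of_nonneg_left h1 hp)
        (mul_le_mul_of_nonneg_left h2 hq)
    have hmono : (∫ ω, max (X ω - (p * a + q * b) * Kt) 0 ∂μ) ≤
        ∫ ω, (p * max (X ω - a * Kt) 0 + q * max (X ω - b * Kt) 0) ∂μ :=
      integral_mono (hint _) (((hint a).const_mul p).add ((hint b).const_mul q)) key
    rw [integral_add ((hint a).const_mul p) ((hint b).const_mul q),
      integral_const_mul, integral_const_mul] at hmono
    nlinarith [hmono]
  · intro hP Δ hΔ
    have hΔK : 0 ≤ Δ * Kt := mul_nonneg hΔ hK.le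
    set S := {ω | 0 ≤ X ω} with hS
    set f : Ω → ℝ := fun ω => max (X ω - 0 * Kt) 0 - max (X ω - Δ * Kt) 0 with hf
    have hfnn : ∀ ω, 0 ≤ f ω := by
      intro ω
      simp only [hf, zero_mul, sub_zero, sub_nonneg]
      exact max_le_max (by linarith) le_rfl
    have hfint : Integrable f μ := (hint 0).sub (hint Δ)
    have hfle : ∀ ω, ENNReal.ofReal (f ω) ≤
        S.indicator (fun _ => ENNReal.ofReal (Δ * Kt)) ω := by
      intro ω
      by_cases hω : ω ∈ S
      · rw [Set.indicator_of_mem hω]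
        apply ENNReal.ofReal_le_ofReal
        have := le_max_left (X ω - Δ * Kt) 0
        simp only [hf, zero_mul, sub_zero]
        have hx : max (X ω) 0 = X ω := max_eq_left hω
        linarith [le_max_left (X ω - Δ * Kt) (0:ℝ)]
      · rw [Set.indicator_of_notMem hω]
        have hx : X ω < 0 := lt_of_not_ge hω
        have : f ω = 0 := by
          simp only [hf, zero_mul, sub_zero]
          rw [max_eq_right hx.le, max_eq_right (by linarith)]
          ring
        simp [this]
    have hint1 : (∫ ω, f ω ∂μ) ≤ Δ * Kt * (μ S).toReal := by
      rw [integral_eq_lintegral_of_nonneg_ae (Filter.Eventually.of_forall hfnn)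
        hfint.aestronglyMeasurable]
      have h1 : (∫⁻ ω, ENNReal.ofReal (f ω) ∂μ) ≤
          ENNReal.ofReal (Δ * Kt) * μ S :=
        le_trans (lintegral_mono hfle) (lintegral_indicator_const_le _ _)
      have hfin : ENNReal.ofReal (Δ * Kt) * μ S ≠ ⊤ :=
        ENNReal.mul_ne_top ENNReal.ofReal_ne_top (measure_ne_top μ S)
      calc (∫⁻ ω, ENNReal.ofReal (f ω) ∂μ).toReal
          ≤ (ENNReal.ofReal (Δ * Kt) * μ S).toReal := ENNReal.toReal_mono hfin h1
        _ = Δ * Kt * (μ S).toReal := by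
            rw [ENNReal.toReal_mul, ENNReal.toReal_ofReal hΔK]
    have hsub : (∫ ω, f ω ∂μ) =
        (∫ ω, max (X ω - 0 * Kt) 0 ∂μ) - ∫ ω, max (X ω - Δ * Kt) 0 ∂μ :=
      integral_sub (hint 0) (hint Δ)
    have hcΔ : Δ * Kt * (μ S).toReal ≤ c * Δ := by
      have := mul_le_mul_of_nonneg_left hP hΔ
      nlinarith [this]
    linarith [hint1, hsub.symm.le]
end
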